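/- (Estimator-based output-feedback closed-loop L2-gain bound.) Let Z be a real Hilbert space, X a linear subspace of Z, A : X → Z a linear map, B₁ : ℝ^r → Z, B₂ : ℝ^m → Z continuous linear maps, C₁ : X → ℝ^p, C₂ : X → ℝ^q, C₃ : X → ℝ^{p₁}, H : X → ℝ^m linear maps, and D₁ : ℝ^r → ℝ^p, D₂ : ℝ^r → ℝ^q, D₃ : ℝ^r → ℝ^{p₁} linear maps. Let P₁ : Z → Z be continuous, self-adjoint, coercive, map X into X with P₁(X) = X (so P₁⁻¹ exists, is continuous, coercive, self-adjoint, and maps X into X); suppose ε₁, γ₁ > 0 satisfy, for all h ∈ X, ω ∈ ℝ^r, υ ∈ ℝ^p: 2⟨A(P₁h) + B₂(Hh) + B₁ω, h⟩ − γ₁‖ω‖² − γ₁‖υ‖² + 2υᵀ(C₁(P₁h) + D₁ω) ≤ −ε₁‖h‖². Let P₂ : Z → Z be continuous, self-adjoint, coercive, 𝒵 : ℝ^q → Z continuous linear, L : ℝ^q → Z continuous linear with P₂(Lv) = 𝒵v for all v; suppose ε₂, γ₂ > 0 satisfy, for all e ∈ X, ω ∈ ℝ^r, υ ∈ ℝ^{p₁}: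 2⟨P₂(Ae) + 𝒵(C₂e), e⟩ − 2⟨P₂(B₁ω) + 𝒵(D₂ω), e⟩ − γ₂‖ω‖² − γ₂‖υ‖² + 2υᵀ(C₃e + D₃ω) ≤ −ε₂‖e‖². Suppose further there exists r > 0 such that for all h, e ∈ X: 2⟨B₂(H(P₁⁻¹e)), h⟩ ≤ ε₁‖h‖² + r·ε₂‖e‖². Let ω : [0,∞) → ℝ^r be continuous and x, e : [0,∞) → Z continuously differentiable with x(t), e(t) ∈ X for all t ≥ 0, x(0) = e(0) = 0, dx/dt(t) = A(x(t)) + B₂(H(P₁⁻¹x(t))) + B₂(H(P₁⁻¹e(t))) + B₁(ω(t)), and de/dt(t) = A(e(t)) + L(C₂(e(t))) − B₁(ω(t)) − L(D₂(ω(t))). Define z(t) = C₁(x(t)) + D₁(ω(t)) and z_e(t) = C₃(e(t)) + D₃(ω(t)) and assume both are continuous. Then for every T ≥ 0: ∫₀ᵀ ‖z(t)‖² dt ≤ γ₁(γ₁ + rγ₂) ∫₀ᵀ ‖ω(t)‖² dt and ∫₀ᵀ ‖z_e(t)‖² dt ≤ γ₂² ∫₀ᵀ ‖ω(t)‖² dt.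 -/

import Mathlib

open RealInnerProductSpace MeasureTheory intervalIntegral


private lemma aux_deriv_bound_integral (V g : ℝ → ℝ) (hg : Continuous g)
    (hd : ∀ t : ℝ, 0 ≤ t → ∃ v : ℝ, HasDerivAt V v t ∧ v ≤ g t)
    (T : ℝ) (hT : 0 ≤ T) : V T ≤ V 0 + ∫ t in (0:ℝ)..T, g t := by
  set G : ℝ → ℝ := fun u => ∫ t in (0:ℝ)..u, g t with hGdef
  have hGd : ∀ u : ℝ, HasDerivAt G (g u) u := fun u =>
    integral_hasDerivAt_right (hg.intervalIntegrable _ _)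
      (hg.aestronglyMeasurable.stronglyMeasurableAtFilter) hg.continuousAt
  set W : ℝ → ℝ := fun u => V u - G u with hWdef
  have hWd : ∀ t : ℝ, 0 ≤ t → ∃ v : ℝ, HasDerivAt W v t ∧ v ≤ 0 := by
    intro t ht
    obtain ⟨v, hv, hvle⟩ := hd t ht
    exact ⟨v - g t, hv.sub (hGd t), by linarith⟩
  have hanti : AntitoneOn W (Set.Icc 0 T) := by
    apply antitoneOn_of_deriv_nonpos (convex_Icc 0 T)
    · intro t ht
      obtain ⟨v, hv, _⟩ := hWd t ht.1
      exact hv.continuousAt.continuousWithinAt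
    · intro t ht
      rw [interior_Icc] at ht
      obtain ⟨v, hv, _⟩ := hWd t ht.1.le
      exact hv.differentiableAt.differentiableWithinAt
    · intro t ht
      rw [interior_Icc] at ht
      obtain ⟨v, hv, hvle⟩ := hWd t ht.1.le
      rw [hv.deriv]; exact hvle
  have h0 : W T ≤ W 0 := hanti (Set.left_mem_Icc.2 hT) (Set.right_mem_Icc.2 hT) hT
  have : G 0 = 0 := integral_same
  simp only [hWdef] at h0
  linarith

set_option maxHeartbeats 1000000 in
/-- (Estimator-based output-feedback closed-loop L2-gain bound,
Theorem 4 of the paper.) Combining the full-state feedback operator inequality, the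
estimator operator inequality, and negativity of the coupling block operator, the
closed-loop system satisfies `‖z‖_{L2} ≤ √(γ₁(γ₁ + rγ₂)) ‖ω‖_{L2}` and
`‖z_e‖_{L2} ≤ γ₂ ‖ω‖_{L2}`. -/
theorem estimator_based_output_feedback_L2_gain
    {Z : Type*} [NormedAddCommGroup Z] [InnerProductSpace ℝ Z] [CompleteSpace Z]
    (X : Submodule ℝ Z) {r m p q p₁ : ℕ}
    (A : X →ₗ[ℝ] Z)
    (B₁ : EuclideanSpace ℝ (Fin r) →L[ℝ] Z) (B₂ : EuclideanSpace ℝ (Fin m) →L[ℝ] Z)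
    (C₁ : X →ₗ[ℝ] EuclideanSpace ℝ (Fin p)) (C₂ : X →ₗ[ℝ] EuclideanSpace ℝ (Fin q))
    (C₃ : X →ₗ[ℝ] EuclideanSpace ℝ (Fin p₁)) (H : X →ₗ[ℝ] EuclideanSpace ℝ (Fin m))
    (D₁ : EuclideanSpace ℝ (Fin r) →ₗ[ℝ] EuclideanSpace ℝ (Fin p))
    (D₂ : EuclideanSpace ℝ (Fin r) →ₗ[ℝ] EuclideanSpace ℝ (Fin q))
    (D₃ : EuclideanSpace ℝ (Fin r) →ₗ[ℝ] EuclideanSpace ℝ (Fin p₁))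
    -- P₁ : self-adjoint, coercive, maps X onto X, with continuous inverse Pinv
    (P₁ Pinv : Z →L[ℝ] Z)
    (hP₁sa : ∀ x y : Z, ⟪P₁ x, y⟫ = ⟪x, P₁ y⟫)
    (hP₁coer : ∃ ε > 0, ∀ x : Z, ⟪x, P₁ x⟫ ≥ ε * ‖x‖ ^ 2)
    (hP₁X : ∀ x ∈ X, P₁ x ∈ X)
    (hP₁img : ⇑P₁ '' (X : Set Z) = (X : Set Z))
    (hinv1 : ∀ x, Pinv (P₁ x) = x) (hinv2 : ∀ x, P₁ (Pinv x) = x)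
    (hPinvsa : ∀ x y : Z, ⟪Pinv x, y⟫ = ⟪x, Pinv y⟫)
    (hPinvcoer : ∃ δ > 0, ∀ x : Z, ⟪x, Pinv x⟫ ≥ δ * ‖x‖ ^ 2)
    (hPinvX : ∀ x ∈ X, Pinv x ∈ X)
    (ε₁ γ₁ : ℝ) (hε₁ : 0 < ε₁) (hγ₁ : 0 < γ₁)
    -- full-state feedback operator inequality
    (hdiss₁ : ∀ (h : X) (ω : EuclideanSpace ℝ (Fin r)) (υ : EuclideanSpace ℝ (Fin p)),
      2 * ⟪A ⟨P₁ (h : Z), hP₁X (h : Z) h.2⟩ + B₂ (H h) + B₁ ω, (h : Z)⟫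
        - γ₁ * ‖ω‖ ^ 2 - γ₁ * ‖υ‖ ^ 2
        + 2 * ⟪υ, C₁ ⟨P₁ (h : Z), hP₁X (h : Z) h.2⟩ + D₁ ω⟫
      ≤ -ε₁ * ‖(h : Z)‖ ^ 2)
    -- P₂ : self-adjoint, coercive; 𝒵 and L with P₂ ∘ L = 𝒵
    (P₂ : Z →L[ℝ] Z)
    (hP₂sa : ∀ x y : Z, ⟪P₂ x, y⟫ = ⟪x, P₂ y⟫)
    (hP₂coer : ∃ ε > 0, ∀ x : Z, ⟪x, P₂ x⟫ ≥ ε * ‖x‖ ^ 2)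
    (𝒵 : EuclideanSpace ℝ (Fin q) →L[ℝ] Z) (L : EuclideanSpace ℝ (Fin q) →L[ℝ] Z)
    (hL : ∀ v, P₂ (L v) = 𝒵 v)
    (ε₂ γ₂ : ℝ) (hε₂ : 0 < ε₂) (hγ₂ : 0 < γ₂)
    -- estimator operator inequality
    (hdiss₂ : ∀ (e : X) (ω : EuclideanSpace ℝ (Fin r)) (υ : EuclideanSpace ℝ (Fin p₁)),
      2 * ⟪P₂ (A e) + 𝒵 (C₂ e), (e : Z)⟫ - 2 * ⟪P₂ (B₁ ω) + 𝒵 (D₂ ω), (e : Z)⟫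
        - γ₂ * ‖ω‖ ^ 2 - γ₂ * ‖υ‖ ^ 2 + 2 * ⟪υ, C₃ e + D₃ ω⟫
      ≤ -ε₂ * ‖(e : Z)‖ ^ 2)
    -- negativity of the coupling block operator M
    (r' : ℝ) (hr' : 0 < r')
    (hcross : ∀ (h e : X) (hme : Pinv (e : Z) ∈ X),
      2 * ⟪B₂ (H ⟨Pinv (e : Z), hme⟩), (h : Z)⟫
        ≤ ε₁ * ‖(h : Z)‖ ^ 2 + r' * ε₂ * ‖(e : Z)‖ ^ 2)
    -- the closed-loop trajectory
    (ω : ℝ → EuclideanSpace ℝ (Fin r)) (hω : Continuous ω)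
    (x e : ℝ → Z)
    (hxX : ∀ t, 0 ≤ t → x t ∈ X) (heX : ∀ t, 0 ≤ t → e t ∈ X)
    (hx0 : x 0 = 0) (he0 : e 0 = 0)
    (hxdyn : ∀ t, 0 ≤ t → ∀ (hmx : x t ∈ X) (hme : e t ∈ X)
        (h1 : Pinv (x t) ∈ X) (h2 : Pinv (e t) ∈ X),
      HasDerivAt x
        (A ⟨x t, hmx⟩ + B₂ (H ⟨Pinv (x t), h1⟩) + B₂ (H ⟨Pinv (e t), h2⟩) + B₁ (ω t)) t)
    (hedyn : ∀ t, 0 ≤ t → ∀ (hme : e t ∈ X),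
      HasDerivAt e (A ⟨e t, hme⟩ + L (C₂ ⟨e t, hme⟩) - B₁ (ω t) - L (D₂ (ω t))) t)
    (z : ℝ → EuclideanSpace ℝ (Fin p)) (ze : ℝ → EuclideanSpace ℝ (Fin p₁))
    (hz : ∀ t, 0 ≤ t → ∀ (hmx : x t ∈ X), z t = C₁ ⟨x t, hmx⟩ + D₁ (ω t))
    (hze : ∀ t, 0 ≤ t → ∀ (hme : e t ∈ X), ze t = C₃ ⟨e t, hme⟩ + D₃ (ω t))
    (hzc : Continuous z) (hzec : Continuous ze) :
    ∀ T, 0 ≤ T →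
      ((∫ t in (0:ℝ)..T, ‖z t‖ ^ 2) ≤ γ₁ * (γ₁ + r' * γ₂) * ∫ t in (0:ℝ)..T, ‖ω t‖ ^ 2) ∧
      ((∫ t in (0:ℝ)..T, ‖ze t‖ ^ 2) ≤ γ₂ ^ 2 * ∫ t in (0:ℝ)..T, ‖ω t‖ ^ 2) := by
  
  have hγ₂ne : γ₂ ≠ 0 := hγ₂.ne'
  have hγ₁ne : γ₁ ≠ 0 := hγ₁.ne'
  have heC : ∀ t : ℝ, 0 ≤ t → ContinuousAt e t := fun t ht =>
    (hedyn t ht (heX t ht)).continuousAt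
  have hebar : Continuous (fun u : ℝ => e (max u 0)) := by
    rw [continuous_iff_continuousAt]
    intro t
    have hmc : ContinuousAt (fun u : ℝ => max u 0) t :=
      (continuous_id.max continuous_const).continuousAt
    exact ContinuousAt.comp (heC (max t 0) (le_max_right t 0)) hmc
  -- the error storage function estimate
  set g₂ : ℝ → ℝ := fun u => γ₂ * ‖ω u‖ ^ 2 - γ₂⁻¹ * ‖ze u‖ ^ 2 - ε₂ * ‖e (max u 0)‖ ^ 2
    with hg₂def
  have hg₂c : Continuous g₂ :=
    ((continuous_const.mul (hω.norm.pow 2)).sub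
      (continuous_const.mul (hzec.norm.pow 2))).sub
      (continuous_const.mul (hebar.norm.pow 2))
  have key₂ : ∀ t : ℝ, 0 ≤ t →
      ∃ v : ℝ, HasDerivAt (fun u => ⟪e u, P₂ (e u)⟫) v t ∧ v ≤ g₂ t := by
    intro t ht
    have hme := heX t ht
    have hde := hedyn t ht hme
    have hPe : HasDerivAt (fun u => P₂ (e u))
        (P₂ (A ⟨e t, hme⟩ + L (C₂ ⟨e t, hme⟩) - B₁ (ω t) - L (D₂ (ω t)))) t :=
      P₂.hasFDerivAt.comp_hasDerivAt t hde
    have hV := HasDerivAt.inner ℝ hde hPe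
    refine ⟨_, hV, ?_⟩
    have hsym : ∀ a : Z, ⟪e t, P₂ a⟫ + ⟪a, P₂ (e t)⟫ = 2 * ⟪P₂ a, e t⟫ := by
      intro a
      have e1 : ⟪e t, P₂ a⟫ = ⟪P₂ a, e t⟫ := real_inner_comm _ _
      have e2 : ⟪a, P₂ (e t)⟫ = ⟪P₂ a, e t⟫ := (hP₂sa a (e t)).symm
      rw [e1, e2]; ring
    rw [hsym]
    have hexp : ⟪P₂ (A ⟨e t, hme⟩ + L (C₂ ⟨e t, hme⟩) - B₁ (ω t) - L (D₂ (ω t))), e t⟫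
        = ⟪P₂ (A ⟨e t, hme⟩) + 𝒵 (C₂ ⟨e t, hme⟩), e t⟫
          - ⟪P₂ (B₁ (ω t)) + 𝒵 (D₂ (ω t)), e t⟫ := by
      simp only [map_add, map_sub, hL, inner_add_left, inner_sub_left]
      ring
    rw [hexp]
    have hze' := hze t ht hme
    have hdz := hdiss₂ ⟨e t, hme⟩ (ω t) (γ₂⁻¹ • ze t)
    simp only [Submodule.coe_mk] at hdz
    have h1 : ⟪(γ₂⁻¹ • ze t : EuclideanSpace ℝ (Fin p₁)), C₃ ⟨e t, hme⟩ + D₃ (ω t)⟫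
        = γ₂⁻¹ * ‖ze t‖ ^ 2 := by
      rw [← hze', real_inner_smul_left, real_inner_self_eq_norm_sq]
    have h2 : ‖(γ₂⁻¹ • ze t : EuclideanSpace ℝ (Fin p₁))‖ ^ 2 = γ₂⁻¹ ^ 2 * ‖ze t‖ ^ 2 := by
      rw [norm_smul, Real.norm_eq_abs, abs_of_pos (inv_pos.2 hγ₂)]
      ring
    rw [h1, h2] at hdz
    have hgg : γ₂ * γ₂⁻¹ ^ 2 = γ₂⁻¹ := by
      rw [pow_two, ← mul_assoc, mul_inv_cancel₀ hγ₂ne, one_mul]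
    have hmax : max t 0 = t := max_eq_left ht
    simp only [hg₂def, hmax]
    nlinarith [hdz, hgg]
  have hV₂bound : ∀ T' : ℝ, 0 ≤ T' →
      ⟪e T', P₂ (e T')⟫ ≤ ∫ u in (0:ℝ)..T', g₂ u := by
    intro T' hT'
    have := aux_deriv_bound_integral _ _ hg₂c key₂ T' hT'
    simpa [he0] using this
  -- the state storage function estimate
  set g₁ : ℝ → ℝ := fun u => γ₁ * ‖ω u‖ ^ 2 - γ₁⁻¹ * ‖z u‖ ^ 2 + r' * ε₂ * ‖e (max u 0)‖ ^ 2
    with hg₁def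
  have hg₁c : Continuous g₁ :=
    ((continuous_const.mul (hω.norm.pow 2)).sub
      (continuous_const.mul (hzc.norm.pow 2))).add
      (continuous_const.mul (hebar.norm.pow 2))
  have key₁ : ∀ t : ℝ, 0 ≤ t →
      ∃ v : ℝ, HasDerivAt (fun u => ⟪x u, Pinv (x u)⟫) v t ∧ v ≤ g₁ t := by
    intro t ht
    have hmx := hxX t ht
    have hme := heX t ht
    have h1 : Pinv (x t) ∈ X := hPinvX _ hmx
    have h2 : Pinv (e t) ∈ X := hPinvX _ hme
    have hdx := hxdyn t ht hmx hme h1 h2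
    have hPx : HasDerivAt (fun u => Pinv (x u))
        (Pinv (A ⟨x t, hmx⟩ + B₂ (H ⟨Pinv (x t), h1⟩) + B₂ (H ⟨Pinv (e t), h2⟩) + B₁ (ω t))) t :=
      Pinv.hasFDerivAt.comp_hasDerivAt t hdx
    have hV := HasDerivAt.inner ℝ hdx hPx
    refine ⟨_, hV, ?_⟩
    have hsym : ∀ a : Z, ⟪x t, Pinv a⟫ + ⟪a, Pinv (x t)⟫ = 2 * ⟪a, Pinv (x t)⟫ := by
      intro a
      have e1 : ⟪x t, Pinv a⟫ = ⟪a, Pinv (x t)⟫ := by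
        rw [← hPinvsa (x t) a]; exact real_inner_comm _ _
      rw [e1]; ring
    rw [hsym]
    have hsplit : ⟪A ⟨x t, hmx⟩ + B₂ (H ⟨Pinv (x t), h1⟩) + B₂ (H ⟨Pinv (e t), h2⟩)
          + B₁ (ω t), Pinv (x t)⟫
        = ⟪A ⟨x t, hmx⟩ + B₂ (H ⟨Pinv (x t), h1⟩) + B₁ (ω t), Pinv (x t)⟫
          + ⟪B₂ (H ⟨Pinv (e t), h2⟩), Pinv (x t)⟫ := by
      simp only [inner_add_left]
      ring
    rw [hsplit]
    -- apply hdiss₁ with h = ⟨Pinv (x t), h1⟩ and υ = γ₁⁻¹ • z t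
    have hd1 := hdiss₁ ⟨Pinv (x t), h1⟩ (ω t) (γ₁⁻¹ • z t)
    have hA : A ⟨P₁ ((⟨Pinv (x t), h1⟩ : X) : Z), hP₁X _ (⟨Pinv (x t), h1⟩ : X).2⟩
        = A ⟨x t, hmx⟩ := congrArg A (Subtype.ext (hinv2 (x t)))
    have hC : C₁ ⟨P₁ ((⟨Pinv (x t), h1⟩ : X) : Z), hP₁X _ (⟨Pinv (x t), h1⟩ : X).2⟩
        = C₁ ⟨x t, hmx⟩ := congrArg C₁ (Subtype.ext (hinv2 (x t)))
    rw [hA, hC] at hd1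
    simp only [Submodule.coe_mk] at hd1
    have hz' := hz t ht hmx
    have h1' : ⟪(γ₁⁻¹ • z t : EuclideanSpace ℝ (Fin p)), C₁ ⟨x t, hmx⟩ + D₁ (ω t)⟫
        = γ₁⁻¹ * ‖z t‖ ^ 2 := by
      rw [← hz', real_inner_smul_left, real_inner_self_eq_norm_sq]
    have h2' : ‖(γ₁⁻¹ • z t : EuclideanSpace ℝ (Fin p))‖ ^ 2 = γ₁⁻¹ ^ 2 * ‖z t‖ ^ 2 := by
      rw [norm_smul, Real.norm_eq_abs, abs_of_pos (inv_pos.2 hγ₁)]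
      ring
    rw [h1', h2'] at hd1
    -- cross term estimate
    have hcr := hcross ⟨Pinv (x t), h1⟩ ⟨e t, hme⟩ h2
    simp only [Submodule.coe_mk] at hcr
    have hgg : γ₁ * γ₁⁻¹ ^ 2 = γ₁⁻¹ := by
      rw [pow_two, ← mul_assoc, mul_inv_cancel₀ hγ₁ne, one_mul]
    have hmax : max t 0 = t := max_eq_left ht
    simp only [hg₁def, hmax]
    nlinarith [hd1, hcr, hgg]
  have hV₁bound : ∀ T' : ℝ, 0 ≤ T' →
      ⟪x T', Pinv (x T')⟫ ≤ ∫ u in (0:ℝ)..T', g₁ u := by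
    intro T' hT'
    have := aux_deriv_bound_integral _ _ hg₁c key₁ T' hT'
    simpa [hx0] using this
  -- positivity of the storage functions
  obtain ⟨ε₂', hε₂'pos, hP₂c⟩ := hP₂coer
  obtain ⟨δ, hδpos, hPinvc⟩ := hPinvcoer
  intro T hT
  set Iω := ∫ t in (0:ℝ)..T, ‖ω t‖ ^ 2 with hIω
  set Iz := ∫ t in (0:ℝ)..T, ‖z t‖ ^ 2 with hIz
  set Ize := ∫ t in (0:ℝ)..T, ‖ze t‖ ^ 2 with hIze
  set Ie := ∫ t in (0:ℝ)..T, ‖e (max t 0)‖ ^ 2 with hIe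
  have hIωnn : 0 ≤ Iω := intervalIntegral.integral_nonneg hT (fun u _ => by positivity)
  have hIznn : 0 ≤ Iz := intervalIntegral.integral_nonneg hT (fun u _ => by positivity)
  have hIzenn : 0 ≤ Ize := intervalIntegral.integral_nonneg hT (fun u _ => by positivity)
  have hIenn : 0 ≤ Ie := intervalIntegral.integral_nonneg hT (fun u _ => by positivity)
  have cω : Continuous fun u : ℝ => γ₂ * ‖ω u‖ ^ 2 := continuous_const.mul (hω.norm.pow 2)
  have cω' : Continuous fun u : ℝ => γ₁ * ‖ω u‖ ^ 2 := continuous_const.mul (hω.norm.pow 2)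
  have cze : Continuous fun u : ℝ => γ₂⁻¹ * ‖ze u‖ ^ 2 := continuous_const.mul (hzec.norm.pow 2)
  have cz : Continuous fun u : ℝ => γ₁⁻¹ * ‖z u‖ ^ 2 := continuous_const.mul (hzc.norm.pow 2)
  have ce : Continuous fun u : ℝ => ε₂ * ‖e (max u 0)‖ ^ 2 :=
    continuous_const.mul (hebar.norm.pow 2)
  have ce' : Continuous fun u : ℝ => r' * ε₂ * ‖e (max u 0)‖ ^ 2 :=
    continuous_const.mul (hebar.norm.pow 2)
  have hIg₂ : ∫ u in (0:ℝ)..T, g₂ u = γ₂ * Iω - γ₂⁻¹ * Ize - ε₂ * Ie := by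
    simp only [hg₂def]
    rw [intervalIntegral.integral_sub (f := fun u : ℝ => γ₂ * ‖ω u‖ ^ 2 - γ₂⁻¹ * ‖ze u‖ ^ 2) ((cω.sub cze).intervalIntegrable _ _)
        (ce.intervalIntegrable _ _),
      intervalIntegral.integral_sub (cω.intervalIntegrable _ _) (cze.intervalIntegrable _ _),
      intervalIntegral.integral_const_mul, intervalIntegral.integral_const_mul,
      intervalIntegral.integral_const_mul]
  have hIg₁ : ∫ u in (0:ℝ)..T, g₁ u = γ₁ * Iω - γ₁⁻¹ * Iz + r' * ε₂ * Ie := by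
    simp only [hg₁def]
    rw [intervalIntegral.integral_add (f := fun u : ℝ => γ₁ * ‖ω u‖ ^ 2 - γ₁⁻¹ * ‖z u‖ ^ 2) ((cω'.sub cz).intervalIntegrable _ _)
        (ce'.intervalIntegrable _ _),
      intervalIntegral.integral_sub (cω'.intervalIntegrable _ _) (cz.intervalIntegrable _ _),
      intervalIntegral.integral_const_mul, intervalIntegral.integral_const_mul,
      intervalIntegral.integral_const_mul]
  have hV₂nn : (0:ℝ) ≤ ⟪e T, P₂ (e T)⟫ := le_trans (by positivity) (hP₂c (e T))
  have hV₁nn : (0:ℝ) ≤ ⟪x T, Pinv (x T)⟫ := le_trans (by positivity) (hPinvc (x T))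
  have hmain₂ : γ₂⁻¹ * Ize + ε₂ * Ie ≤ γ₂ * Iω := by
    have := le_trans hV₂nn ((hV₂bound T hT).trans_eq hIg₂)
    linarith
  have hmain₁ : γ₁⁻¹ * Iz ≤ γ₁ * Iω + r' * ε₂ * Ie := by
    have := le_trans hV₁nn ((hV₁bound T hT).trans_eq hIg₁)
    linarith
  have hinv₂ : γ₂ * γ₂⁻¹ = 1 := mul_inv_cancel₀ hγ₂ne
  have hinv₁ : γ₁ * γ₁⁻¹ = 1 := mul_inv_cancel₀ hγ₁ne
  constructor
  · -- Iz ≤ γ₁ (γ₁ + r' γ₂) Iω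
    have he' : ε₂ * Ie ≤ γ₂ * Iω := by nlinarith [mul_nonneg (inv_pos.2 hγ₂).le hIzenn]
    have : γ₁⁻¹ * Iz ≤ γ₁ * Iω + r' * (γ₂ * Iω) := by nlinarith
    nlinarith [mul_le_mul_of_nonneg_left this hγ₁.le]
  · -- Ize ≤ γ₂² Iω
    have : γ₂⁻¹ * Ize ≤ γ₂ * Iω := by nlinarith [mul_nonneg hε₂.le hIenn]
    nlinarith [mul_le_mul_of_nonneg_left this hγ₂.le]
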